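/- Let p be a prime with p ≡ 1 (mod 4). Then Σ_{k=0}^{p-1} C(2k,k)² · F_k · 16^(p-1-k) ≡ 0 (mod p²), where F_k is the k-th Fibonacci number (F_0 = 0, F_1 = 1, F_{k+2} = F_{k+1} + F_k). Equivalently, Σ_{k=0}^{p-1} C(2k,k)² F_k / 16^k ≡ 0 (mod p²). -/

import Mathlib

open Finset

-- alternating binomial transform step
lemma alt_step (g : ℕ → ℤ) (k : ℕ) :
    ∑ j ∈ range (k + 2), (-1 : ℤ) ^ j * (k + 1).choose j * g j =
      ∑ j ∈ range (k + 1), (-1 : ℤ) ^ j * k.choose j * g j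
        - ∑ j ∈ range (k + 1), (-1 : ℤ) ^ j * k.choose j * g (j + 1) := by
  have h2 : ∑ j ∈ range (k + 2), (-1 : ℤ) ^ j * k.choose j * g j
      = ∑ j ∈ range (k + 1), (-1 : ℤ) ^ j * k.choose j * g j := by
    rw [Finset.sum_range_succ, Nat.choose_succ_self]
    simp
  rw [Finset.sum_range_succ' _ (k + 1)]
  rw [← h2, Finset.sum_range_succ' (fun j => (-1 : ℤ) ^ j * k.choose j * g j) (k + 1)]
  have h1 : ∀ i ∈ range (k + 1), ((-1 : ℤ)) ^ (i + 1) * ((k + 1).choose (i + 1) : ℤ) * g (i + 1)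
      = (-1) ^ (i + 1) * (k.choose (i + 1) : ℤ) * g (i + 1)
        - (-1) ^ i * k.choose i * g (i + 1) := by
    intro i _
    rw [Nat.choose_succ_succ]
    push_cast
    ring
  rw [Finset.sum_congr rfl h1, Finset.sum_sub_distrib]
  simp
  ring

lemma altsum_choose (n : ℕ) : ∀ m, ∀ a : ℕ, m ≤ n →
    ∑ i ∈ range (m + 1), (-1 : ℤ) ^ i * m.choose i * ((a + i).choose n : ℤ)
      = (-1) ^ m * (a.choose (n - m) : ℤ) := by
  intro m
  induction m with
  | zero => intro a _; simp
  | succ m ih =>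
    intro a hm
    have hm' : m ≤ n := Nat.le_of_succ_le hm
    have e1 := alt_step (fun i => ((a + i).choose n : ℤ)) m
    rw [e1, ih a hm']
    have e2 : ∑ i ∈ range (m + 1), (-1 : ℤ) ^ i * m.choose i * ((a + (i + 1)).choose n : ℤ)
        = (-1) ^ m * ((a + 1).choose (n - m) : ℤ) := by
      rw [← ih (a + 1) hm']
      apply Finset.sum_congr rfl
      intro i _
      have : a + (i + 1) = a + 1 + i := by omega
      rw [this]
    rw [e2]
    have hnm : n - m = (n - (m + 1)) + 1 := by omega
    rw [hnm, Nat.choose_succ_succ' a (n - (m + 1))]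
    push_cast
    ring

lemma fib_altsum (k : ℕ) :
    (∑ j ∈ range (k + 1), (-1 : ℤ) ^ j * k.choose j * (Nat.fib j : ℤ)) = -(Nat.fib k : ℤ) ∧
    (∑ j ∈ range (k + 1), (-1 : ℤ) ^ j * k.choose j * (Nat.fib (j + 1) : ℤ))
      = (Nat.fib (k + 1) : ℤ) - (Nat.fib k : ℤ) := by
  induction k with
  | zero => simp
  | succ k ih =>
    obtain ⟨hG, hH⟩ := ih
    constructor
    · rw [alt_step (fun j => (Nat.fib j : ℤ)) k, hG, hH]
      ring
    · rw [alt_step (fun j => (Nat.fib (j + 1) : ℤ)) k, hH]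
      have e : ∑ j ∈ range (k + 1), (-1 : ℤ) ^ j * k.choose j * (Nat.fib (j + 1 + 1) : ℤ)
          = ∑ j ∈ range (k + 1), ((-1 : ℤ) ^ j * k.choose j * (Nat.fib j : ℤ)
              + (-1 : ℤ) ^ j * k.choose j * (Nat.fib (j + 1) : ℤ)) := by
        apply Finset.sum_congr rfl
        intro j _
        rw [Nat.fib_add_two]
        push_cast
        ring
      rw [e, Finset.sum_add_distrib, hG, hH]
      push_cast [Nat.fib_add_two]
      ring

lemma row_identity (n j : ℕ) (hn : Even n) (hj : j ≤ n) :
    ∑ k ∈ range (n + 1), (-1 : ℤ) ^ k * (n.choose k * (n + k).choose k : ℕ) * (k.choose j : ℤ)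
      = (n.choose j * (n + j).choose j : ℕ) := by
  rw [Finset.range_eq_Ico, ← Finset.sum_Ico_consecutive _ (Nat.zero_le j) (by omega : j ≤ n + 1)]
  have h0 : ∑ k ∈ Finset.Ico 0 j, (-1 : ℤ) ^ k * (n.choose k * (n + k).choose k : ℕ) * (k.choose j : ℤ) = 0 := by
    apply Finset.sum_eq_zero
    intro k hk
    rw [Finset.mem_Ico] at hk
    rw [Nat.choose_eq_zero_of_lt hk.2]
    simp
  rw [h0, zero_add, Finset.sum_Ico_eq_sum_range]
  have hrange : n + 1 - j = (n - j) + 1 := by omega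
  rw [hrange]
  have step : ∀ i ∈ range ((n - j) + 1),
      (-1 : ℤ) ^ (j + i) * (n.choose (j + i) * (n + (j + i)).choose (j + i) : ℕ) * ((j + i).choose j : ℤ)
      = ((-1 : ℤ) ^ j * (n.choose j : ℤ)) * ((-1 : ℤ) ^ i * ((n - j).choose i : ℤ) * (((n + j) + i).choose n : ℤ)) := by
    intro i hi
    rw [Finset.mem_range] at hi
    have hji : j + i ≤ n := by omega
    have htri : n.choose (j + i) * (j + i).choose j = n.choose j * (n - j).choose (j + i - j) :=
      Nat.choose_mul (Nat.le_add_right j i)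
    have hsimp : j + i - j = i := by omega
    rw [hsimp] at htri
    have hsymm : (n + (j + i)).choose (j + i) = ((n + j) + i).choose n := by
      have : (n + (j + i)) - (j + i) = n := by omega
      rw [← Nat.choose_symm (by omega : j + i ≤ n + (j + i)), this]
      congr 1
      omega
    rw [hsymm]
    have := congrArg (fun x : ℕ => (x : ℤ)) htri
    push_cast at this ⊢
    rw [pow_add]
    linear_combination ((-1:ℤ) ^ (j + i) * (((n + j) + i).choose n : ℤ)) * this
  rw [Finset.sum_congr rfl step, ← Finset.mul_sum,
    altsum_choose n (n - j) (n + j) (by omega)]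
  have hnnj : n - (n - j) = j := by omega
  rw [hnnj]
  have hsign : (-1 : ℤ) ^ j * (-1 : ℤ) ^ (n - j) = 1 := by
    rw [← pow_add]
    have : j + (n - j) = n := by omega
    rw [this, hn.neg_one_pow]
  push_cast
  linear_combination ((n.choose j : ℤ) * ((n + j).choose j : ℤ)) * hsign

lemma W_zero (n : ℕ) (hn : Even n) :
    ∑ k ∈ range (n + 1), (-1 : ℤ) ^ k * (n.choose k * (n + k).choose k : ℕ) * (Nat.fib k : ℤ)
      = 0 := by
  set W := ∑ k ∈ range (n + 1), (-1 : ℤ) ^ k * (n.choose k * (n + k).choose k : ℕ) * (Nat.fib k : ℤ) with hW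
  have key : W = -W := by
    calc W = ∑ j ∈ range (n + 1), (-1 : ℤ) ^ j * (Nat.fib j : ℤ) *
            (∑ k ∈ range (n + 1), (-1 : ℤ) ^ k * (n.choose k * (n + k).choose k : ℕ) * (k.choose j : ℤ)) := by
          apply Finset.sum_congr rfl
          intro j hj
          rw [Finset.mem_range] at hj
          rw [row_identity n j hn (by omega)]
          ring
      _ = ∑ k ∈ range (n + 1), ((-1 : ℤ) ^ k * (n.choose k * (n + k).choose k : ℕ)) *
            (∑ j ∈ range (n + 1), (-1 : ℤ) ^ j * (k.choose j : ℤ) * (Nat.fib j : ℤ)) := by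
          simp only [Finset.mul_sum, Finset.sum_mul]
          rw [Finset.sum_comm]
          apply Finset.sum_congr rfl; intro k _
          apply Finset.sum_congr rfl; intro j _
          ring
      _ = ∑ k ∈ range (n + 1), ((-1 : ℤ) ^ k * (n.choose k * (n + k).choose k : ℕ)) *
            (-(Nat.fib k : ℤ)) := by
          apply Finset.sum_congr rfl
          intro k hk
          rw [Finset.mem_range] at hk
          congr 1
          have hsub : ∑ j ∈ range (n + 1), (-1 : ℤ) ^ j * (k.choose j : ℤ) * (Nat.fib j : ℤ)
              = ∑ j ∈ range (k + 1), (-1 : ℤ) ^ j * (k.choose j : ℤ) * (Nat.fib j : ℤ) := by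
            symm
            apply Finset.sum_subset (Finset.range_subset_range.mpr (by omega))
            intro j _ hj
            rw [Finset.mem_range, not_lt] at hj
            rw [Nat.choose_eq_zero_of_lt (by omega)]
            simp
          rw [hsub, (fib_altsum k).1]
      _ = -W := by
          rw [hW, ← Finset.sum_neg_distrib]
          apply Finset.sum_congr rfl
          intro k _
          ring
  linarith

lemma two_mul_fact (k : ℕ) :
    (2 * k).factorial = 2 ^ k * (k.factorial) * ∏ j ∈ range k, (2 * j + 1) := by
  induction k with
  | zero => simp
  | succ k ih =>
    have h2 : 2 * (k + 1) = (2 * k + 1) + 1 := by omega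
    rw [h2, Nat.factorial_succ, Nat.factorial_succ, ih, Finset.prod_range_succ,
      Nat.factorial_succ]
    ring

lemma catalan_mul_fact (k : ℕ) :
    (2 * k).choose k * (k.factorial) = 2 ^ k * ∏ j ∈ range k, (2 * j + 1) := by
  have h := Nat.choose_mul_factorial_mul_factorial (by omega : k ≤ 2 * k)
  have hsub : 2 * k - k = k := by omega
  rw [hsub] at h
  have h2 := two_mul_fact k
  rw [← h] at h2
  have : (k.factorial) * ((2 * k).choose k * k.factorial) = (k.factorial) * (2 ^ k * ∏ j ∈ range k, (2 * j + 1)) := by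
    calc (k.factorial) * ((2 * k).choose k * k.factorial)
        = (2 * k).choose k * k.factorial * k.factorial := by ring
      _ = 2 ^ k * k.factorial * ∏ j ∈ range k, (2 * j + 1) := h2
      _ = (k.factorial) * (2 ^ k * ∏ j ∈ range k, (2 * j + 1)) := by ring
  exact Nat.eq_of_mul_eq_mul_left (Nat.factorial_pos k) this

lemma keyprod (n : ℕ) : ∀ k, k ≤ n →
    (4 : ℤ) ^ k * ((k.factorial) : ℤ) ^ 2 * (n.choose k : ℤ) * ((n + k).choose k : ℤ)
      = ∏ j ∈ range k, ((2 * (n : ℤ) + 1) ^ 2 - (2 * (j : ℤ) + 1) ^ 2) := by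
  intro k
  induction k with
  | zero => simp
  | succ k ih =>
    intro hk
    have ih' := ih (by omega)
    have h1 : ((n.choose (k + 1)) : ℤ) * (k + 1) = (n.choose k : ℤ) * ((n : ℤ) - k) := by
      have := Nat.choose_succ_right_eq n k
      have hcast := congrArg (fun x : ℕ => (x : ℤ)) this
      push_cast [Nat.cast_sub (by omega : k ≤ n)] at hcast
      linarith [hcast]
    have h2 : (((n + k + 1).choose (k + 1)) : ℤ) * (k + 1) = ((n : ℤ) + k + 1) * ((n + k).choose k : ℤ) := by
      have := Nat.add_one_mul_choose_eq (n + k) k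
      have hcast := congrArg (fun x : ℕ => (x : ℤ)) this
      push_cast at hcast
      linarith [hcast]
    rw [Finset.prod_range_succ, ← ih']
    have hne : ((k : ℤ) + 1) ≠ 0 := by positivity
    apply mul_left_cancel₀ (pow_ne_zero 2 hne)
    have hplus : ((n + (k+1)) : ℕ) = n + k + 1 := by omega
    rw [Nat.factorial_succ, hplus]
    push_cast
    have h12 : (((n.choose (k + 1)) : ℤ) * (k + 1)) * ((((n + k + 1).choose (k + 1)) : ℤ) * (k + 1))
        = ((n.choose k : ℤ) * ((n : ℤ) - k)) * (((n : ℤ) + k + 1) * ((n + k).choose k : ℤ)) := by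
      rw [h1, h2]
    linear_combination (4 ^ (k + 1) * ((k.factorial) : ℤ) ^ 2 * ((k:ℤ)+1)^2) * h12

lemma central_eq (p n : ℕ) (hp : p.Prime) (hpn : p = 2 * n + 1) (k : ℕ) (hk : k ≤ n) :
    (((2 * k).choose k : ZMod (p ^ 2)) : ZMod (p ^ 2)) ^ 2
      = (-16) ^ k * (n.choose k : ZMod (p ^ 2)) * ((n + k).choose k : ZMod (p ^ 2)) := by
  set R := ZMod (p ^ 2)
  have hu : IsUnit ((k.factorial : ℕ) : R) := by
    rw [ZMod.isUnit_iff_coprime]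
    apply Nat.Coprime.pow_right
    rw [Nat.coprime_comm]
    apply (Nat.Prime.coprime_iff_not_dvd hp).mpr
    rw [Nat.Prime.dvd_factorial hp]
    omega
  have hp0 : ((p : R)) ^ 2 = 0 := by
    rw [← Nat.cast_pow, ZMod.natCast_self]
  set D : R := ((∏ j ∈ range k, (2 * j + 1) : ℕ) : R) with hD
  -- from catalan_mul_fact
  have hcat : ((2 * k).choose k : R) * (k.factorial : R) = 2 ^ k * D := by
    have := congrArg (fun x : ℕ => (x : R)) (catalan_mul_fact k)
    push_cast +zetaDelta at this
    push_cast +zetaDelta [hD]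
    exact this
  -- from keyprod, cast to R
  have hkp : (4 : R) ^ k * ((k.factorial : R)) ^ 2 * (n.choose k : R) * ((n + k).choose k : R)
      = (-1) ^ k * D ^ 2 := by
    have h1 := congrArg (fun x : ℤ => ((x : R) : R)) (keyprod n k hk)
    push_cast +zetaDelta at h1
    have h2 : ∀ j ∈ range k, ((2 * (n : R) + 1) ^ 2 - (2 * (j : R) + 1) ^ 2)
        = -((2 * (j : R) + 1) ^ 2) := by
      intro j _
      have hnp : (2 * (n : R) + 1) = (p : R) := by
        have h := congrArg (fun m : ℕ => (m : R)) hpn.symm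
        push_cast +zetaDelta at h
        exact h
      linear_combination ((2 * (n : R) + 1) + (p : R)) * hnp + hp0
    rw [Finset.prod_congr rfl h2] at h1
    have h3 : ∏ j ∈ range k, -((2 * (j : R) + 1) ^ 2) = (-1) ^ k * D ^ 2 := by
      rw [hD]
      push_cast +zetaDelta
      have hstep : ∀ j ∈ range k, -((2 * (j:R) + 1) ^ 2) = (-1) * ((2 * (j:R) + 1)) ^ 2 :=
        fun j _ => by ring
      rw [Finset.prod_congr rfl hstep, Finset.prod_mul_distrib, Finset.prod_const,
        Finset.card_range, Finset.prod_pow]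
    rw [h3] at h1
    exact h1
  -- cancel units
  have hu2 : IsUnit (((k.factorial : ℕ) : R) ^ 2) := hu.pow 2
  apply hu2.mul_left_cancel
  calc ((k.factorial : R)) ^ 2 * (((2 * k).choose k : R)) ^ 2
      = (((2 * k).choose k : R) * (k.factorial : R)) ^ 2 := by ring
    _ = (2 ^ k * D) ^ 2 := by rw [hcat]
    _ = 4 ^ k * D ^ 2 := by
        rw [mul_pow, ← pow_mul, mul_comm k 2, pow_mul]
        norm_num
    _ = (-4 : R) ^ k * ((-1) ^ k * D ^ 2) := by
        have hm : (-4 : R) ^ k * (-1) ^ k = 4 ^ k := by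
          rw [← mul_pow]; norm_num
        linear_combination (-(D ^ 2)) * hm
    _ = (-4 : R) ^ k * ((4 : R) ^ k * ((k.factorial : R)) ^ 2 * (n.choose k : R) * ((n + k).choose k : R)) := by rw [hkp]
    _ = ((k.factorial : R)) ^ 2 * ((-16) ^ k * (n.choose k : R) * ((n + k).choose k : R)) := by
        rw [show ((-16 : R)) ^ k = (-4 : R) ^ k * (4 : R) ^ k by rw [← mul_pow]; norm_num]
        ring

theorem rv_fibonacci (p : ℕ) (hp : p.Prime) (hp4 : p % 4 = 1) :
    (∑ k ∈ range p,
        ((Nat.choose (2 * k) k : ℤ)) ^ 2 * (Nat.fib k : ℤ) * 16 ^ (p - 1 - k)) ≡ 0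
      [ZMOD (p : ℤ) ^ 2] := by
  -- obtain n with p = 2n+1, n even
  obtain ⟨m, hm⟩ : ∃ m, p = 4 * m + 1 := ⟨p / 4, by omega⟩
  set n := 2 * m with hn
  have hpn : p = 2 * n + 1 := by omega
  have hneven : Even n := ⟨m, by omega⟩
  set R := ZMod (p ^ 2) with hR
  -- reduce to a statement in ZMod (p^2)
  have key : ((∑ k ∈ range p,
      ((Nat.choose (2 * k) k : ℤ)) ^ 2 * (Nat.fib k : ℤ) * 16 ^ (p - 1 - k) : ℤ) : R) = 0 := by
    push_cast +zetaDelta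
    -- split the sum
    rw [Finset.range_eq_Ico,
      ← Finset.sum_Ico_consecutive _ (Nat.zero_le (n + 1)) (by omega : n + 1 ≤ p)]
    have hupper : ∑ k ∈ Finset.Ico (n + 1) p,
        (((2 * k).choose k : R)) ^ 2 * (Nat.fib k : R) * 16 ^ (p - 1 - k) = 0 := by
      apply Finset.sum_eq_zero
      intro k hk
      rw [Finset.mem_Ico] at hk
      have hdvd : p ∣ (2 * k).choose k := by
        have := Nat.Prime.dvd_choose_add hp (by omega : k < p) (by omega : k < p)
          (by omega : p ≤ k + k)
        rwa [show k + k = 2 * k by ring] at this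
      obtain ⟨c, hc⟩ := hdvd
      have : (((2 * k).choose k : ℕ) : R) = (p : R) * (c : R) := by
        rw [hc]; push_cast +zetaDelta; ring
      rw [this]
      have hp0 : ((p : R)) ^ 2 = 0 := by rw [← Nat.cast_pow, ZMod.natCast_self]
      calc ((p : R) * c) ^ 2 * (Nat.fib k : R) * 16 ^ (p - 1 - k)
          = ((p:R))^2 * ((c:R))^2 * (Nat.fib k : R) * 16 ^ (p - 1 - k) := by ring
        _ = 0 := by rw [hp0]; ring
    rw [hupper, add_zero]
    have hlower : ∀ k ∈ Finset.Ico 0 (n + 1),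
        (((2 * k).choose k : R)) ^ 2 * (Nat.fib k : R) * 16 ^ (p - 1 - k)
          = (16 : R) ^ (2 * n) *
            ((-1) ^ k * ((n.choose k * (n + k).choose k : ℕ) : R) * (Nat.fib k : R)) := by
      intro k hk
      rw [Finset.mem_Ico] at hk
      have hkn : k ≤ n := by omega
      rw [central_eq p n hp hpn k hkn]
      have hexp : p - 1 - k = 2 * n - k := by omega
      rw [hexp]
      have h16 : (16 : R) ^ k * (16 : R) ^ (2 * n - k) = (16 : R) ^ (2 * n) := by
        rw [← pow_add]
        congr 1
        omega
      have hneg : ((-16 : R)) ^ k = (-1) ^ k * 16 ^ k := by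
        rw [show (-16 : R) = (-1) * 16 by norm_num, mul_pow]
      rw [hneg]
      push_cast +zetaDelta
      linear_combination ((-1 : R) ^ k * (n.choose k : R) * ((n + k).choose k : R)
        * (Nat.fib k : R)) * h16
    rw [Finset.sum_congr rfl hlower, ← Finset.mul_sum]
    have hW := W_zero n hneven
    have hWc := congrArg (fun x : ℤ => ((x : R) : R)) hW
    push_cast +zetaDelta at hWc
    push_cast +zetaDelta
    rw [← Finset.range_eq_Ico, hWc]
    ring
  have hdvd := (ZMod.intCast_zmod_eq_zero_iff_dvd _ (p ^ 2)).mp key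
  have hdvd' : ((p : ℤ)) ^ 2 ∣ (∑ k ∈ range p,
      ((Nat.choose (2 * k) k : ℤ)) ^ 2 * (Nat.fib k : ℤ) * 16 ^ (p - 1 - k)) := by
    push_cast at hdvd
    exact_mod_cast hdvd
  exact (Int.modEq_zero_iff_dvd).mpr hdvd'
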